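/- Define the kernel K : ℝ → ℝ → ℂ by K q q' = ((q + q') * Real.sign (q − q') − (q^2 − q'^2)) / (4 * Complex.I). Let φ : ℝ → ℂ be twice continuously differentiable and satisfy φ (−1) = 0, φ 1 = 0, deriv φ (−1) = 0, deriv φ 1 = 0, ∫ q' in (-1:ℝ)..1, φ q' = 0, and ∫ q' in (-1:ℝ)..1, (q' : ℂ) * φ q' = 0. Define (T ψ) q = ∫ q' in (-1:ℝ)..1, K q q' * ψ q' and (H ψ) q = −(1/2) * deriv (deriv ψ) q. Then for every q in the open interval (−1, 1), (T (H φ)) q − (H (T φ)) q = −Complex.I * φ q. (The quantized time-of-arrival operator T for a particle confined in the box [−1,1] and the kinetic Hamiltonian H = −½ d²/dq² satisfy the canonical commutation relation, with commutator −i in the order TH − HT, on the subspace of functions with vanishing boundary values, vanishing boundary derivatives, and vanishing zeroth and first moments.) -/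

import Mathlib

/-- The kernel of the quantized time-of-arrival operator for the box `[-1,1]`. -/
noncomputable def Kker (q q' : ℝ) : ℂ :=
  (((q + q') * Real.sign (q - q') - (q ^ 2 - q' ^ 2) : ℝ) : ℂ) / (4 * Complex.I)

/-- The time-of-arrival integral operator. -/
noncomputable def Tarr (ψ : ℝ → ℂ) (q : ℝ) : ℂ :=
  ∫ q' in (-1:ℝ)..1, Kker q q' * ψ q'

/-- The kinetic Hamiltonian `H = -½ d²/dq²`. -/
noncomputable def Hop (ψ : ℝ → ℂ) (q : ℝ) : ℂ :=
  -(1 / 2) * deriv (deriv ψ) q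

lemma Kker_left {q x : ℝ} (h : x < q) :
    Kker q x = (((q - q^2 + x + x^2 : ℝ)) : ℂ) / (4 * Complex.I) := by
  unfold Kker
  rw [Real.sign_of_pos (by linarith : (0:ℝ) < q - x)]
  congr 2; ring

lemma Kker_right {q x : ℝ} (h : q < x) :
    Kker q x = (((-q - q^2 - x + x^2 : ℝ)) : ℂ) / (4 * Complex.I) := by
  unfold Kker
  rw [Real.sign_of_neg (by linarith : q - x < 0)]
  congr 2; ring

open MeasureTheory intervalIntegral in
lemma tarr_formula (ψ : ℝ → ℂ) (hψ : Continuous ψ) {q : ℝ} (hq : q ∈ Set.Ioo (-1:ℝ) 1) :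
    Tarr ψ q = (2*(q:ℂ)*(∫ x in (-1:ℝ)..q, ψ x)
      - ((q:ℂ) + (q:ℂ)^2)*(∫ x in (-1:ℝ)..1, ψ x)
      + 2*(∫ x in (-1:ℝ)..q, (x:ℂ)*ψ x) - (∫ x in (-1:ℝ)..1, (x:ℂ)*ψ x)
      + (∫ x in (-1:ℝ)..1, (x:ℂ)^2*ψ x)) / (4*Complex.I) := by
  obtain ⟨hq1, hq2⟩ := hq
  have hne : ∀ᵐ x : ℝ, x ≠ q := by
    have hs : {x : ℝ | ¬ x ≠ q} = {q} := by ext x; simp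
    rw [MeasureTheory.ae_iff, hs]
    exact measure_singleton q
  -- integrability of basic pieces
  have hi0 : ∀ a b : ℝ, IntervalIntegrable ψ volume a b :=
    fun a b => hψ.intervalIntegrable a b
  have hi1 : ∀ a b : ℝ, IntervalIntegrable (fun x : ℝ => (x:ℂ) * ψ x) volume a b :=
    fun a b => (Continuous.mul (by continuity) hψ).intervalIntegrable a b
  have hi2 : ∀ a b : ℝ, IntervalIntegrable (fun x : ℝ => (x:ℂ)^2 * ψ x) volume a b :=
    fun a b => (Continuous.mul (by continuity) hψ).intervalIntegrable a b
  set fL : ℝ → ℂ := fun x => (((q - q^2 + x + x^2 : ℝ)) : ℂ) / (4 * Complex.I) * ψ x with hfL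
  set fR : ℝ → ℂ := fun x => (((-q - q^2 - x + x^2 : ℝ)) : ℂ) / (4 * Complex.I) * ψ x with hfR
  have hfLc : Continuous fL := by apply Continuous.mul ?_ hψ; continuity
  have hfRc : Continuous fR := by apply Continuous.mul ?_ hψ; continuity
  have haeL : ∀ᵐ x : ℝ, x ∈ Set.uIoc (-1:ℝ) q → Kker q x * ψ x = fL x := by
    filter_upwards [hne] with x hx hmem
    rw [Set.uIoc_of_le (by linarith)] at hmem
    rw [Kker_left (lt_of_le_of_ne hmem.2 hx)]
  have haeR : ∀ᵐ x : ℝ, x ∈ Set.uIoc q (1:ℝ) → Kker q x * ψ x = fR x := by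
    filter_upwards [hne] with x hx hmem
    rw [Set.uIoc_of_le (by linarith)] at hmem
    rw [Kker_right hmem.1]
  have hIL : IntervalIntegrable (fun x => Kker q x * ψ x) volume (-1) q := by
    exact (hfLc.intervalIntegrable _ _).congr_ae
      (Filter.EventuallyEq.symm ((ae_restrict_iff' measurableSet_uIoc).mpr haeL))
  have hIR : IntervalIntegrable (fun x => Kker q x * ψ x) volume q 1 := by
    exact (hfRc.intervalIntegrable _ _).congr_ae
      (Filter.EventuallyEq.symm ((ae_restrict_iff' measurableSet_uIoc).mpr haeR))
  have hsplit : Tarr ψ q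
      = (∫ x in (-1:ℝ)..q, Kker q x * ψ x) + ∫ x in q..(1:ℝ), Kker q x * ψ x :=
    (integral_add_adjacent_intervals hIL hIR).symm
  have hEL : (∫ x in (-1:ℝ)..q, Kker q x * ψ x) = ∫ x in (-1:ℝ)..q, fL x :=
    integral_congr_ae haeL
  have hER : (∫ x in q..(1:ℝ), Kker q x * ψ x) = ∫ x in q..(1:ℝ), fR x :=
    integral_congr_ae haeR
  -- expand fL integral
  have hL2 : (∫ x in (-1:ℝ)..q, fL x)
      = (((q:ℂ)-(q:ℂ)^2) * (∫ x in (-1:ℝ)..q, ψ x) + ((∫ x in (-1:ℝ)..q, (x:ℂ)*ψ x)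
        + (∫ x in (-1:ℝ)..q, (x:ℂ)^2*ψ x))) / (4*Complex.I) := by
    have h1 : fL = fun x : ℝ =>
        (((q:ℂ)-(q:ℂ)^2) * ψ x + ((x:ℂ)*ψ x + (x:ℂ)^2*ψ x))/(4*Complex.I) := by
      funext x; simp only [hfL]; push_cast; ring
    rw [h1, intervalIntegral.integral_div,
      integral_add ((hi0 _ _).const_mul _) ((hi1 _ _).add (hi2 _ _)),
      integral_add (hi1 _ _) (hi2 _ _), intervalIntegral.integral_const_mul]
  have hR2 : (∫ x in q..(1:ℝ), fR x)
      = ((-(q:ℂ)-(q:ℂ)^2) * (∫ x in q..(1:ℝ), ψ x) + ((∫ x in q..(1:ℝ), (x:ℂ)^2*ψ x)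
        - (∫ x in q..(1:ℝ), (x:ℂ)*ψ x))) / (4*Complex.I) := by
    have h1 : fR = fun x : ℝ =>
        ((-(q:ℂ)-(q:ℂ)^2) * ψ x + ((x:ℂ)^2*ψ x - (x:ℂ)*ψ x))/(4*Complex.I) := by
      funext x; simp only [hfR]; push_cast; ring
    rw [h1, intervalIntegral.integral_div,
      integral_add ((hi0 _ _).const_mul _) ((hi2 _ _).sub (hi1 _ _)),
      integral_sub (hi2 _ _) (hi1 _ _), intervalIntegral.integral_const_mul]
  -- relate right-piece integrals to full integrals
  have hA : (∫ x in (-1:ℝ)..q, ψ x) + (∫ x in q..(1:ℝ), ψ x) = ∫ x in (-1:ℝ)..1, ψ x :=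
    integral_add_adjacent_intervals (hi0 _ _) (hi0 _ _)
  have hB : (∫ x in (-1:ℝ)..q, (x:ℂ)*ψ x) + (∫ x in q..(1:ℝ), (x:ℂ)*ψ x)
      = ∫ x in (-1:ℝ)..1, (x:ℂ)*ψ x :=
    integral_add_adjacent_intervals (hi1 _ _) (hi1 _ _)
  have hC : (∫ x in (-1:ℝ)..q, (x:ℂ)^2*ψ x) + (∫ x in q..(1:ℝ), (x:ℂ)^2*ψ x)
      = ∫ x in (-1:ℝ)..1, (x:ℂ)^2*ψ x :=
    integral_add_adjacent_intervals (hi2 _ _) (hi2 _ _)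
  have hA' : (∫ x in q..(1:ℝ), ψ x) = (∫ x in (-1:ℝ)..1, ψ x) - ∫ x in (-1:ℝ)..q, ψ x := by
    linear_combination hA
  have hB' : (∫ x in q..(1:ℝ), (x:ℂ)*ψ x)
      = (∫ x in (-1:ℝ)..1, (x:ℂ)*ψ x) - ∫ x in (-1:ℝ)..q, (x:ℂ)*ψ x := by
    linear_combination hB
  have hC' : (∫ x in q..(1:ℝ), (x:ℂ)^2*ψ x)
      = (∫ x in (-1:ℝ)..1, (x:ℂ)^2*ψ x) - ∫ x in (-1:ℝ)..q, (x:ℂ)^2*ψ x := by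
    linear_combination hC
  rw [hsplit, hEL, hER, hL2, hR2, hA', hB', hC']
  ring

open MeasureTheory intervalIntegral Set in
theorem time_of_arrival_canonical_commutation
    (φ : ℝ → ℂ) (hφ : ContDiff ℝ 2 φ)
    (hb1 : φ (-1) = 0) (hb2 : φ 1 = 0)
    (hb3 : deriv φ (-1) = 0) (hb4 : deriv φ 1 = 0)
    (hm0 : (∫ q' in (-1:ℝ)..1, φ q') = 0)
    (hm1 : (∫ q' in (-1:ℝ)..1, (q' : ℂ) * φ q') = 0) :
    ∀ q ∈ Set.Ioo (-1 : ℝ) 1,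
      Tarr (Hop φ) q - Hop (Tarr φ) q = -Complex.I * φ q := by
  -- regularity facts
  have hφd : Differentiable ℝ φ := hφ.differentiable (by norm_num)
  have hdφ : ContDiff ℝ 1 (deriv φ) := by
    have := (contDiff_succ_iff_deriv (n := 1)).mp (by exact_mod_cast hφ)
    exact this.2.2
  have hdφd : Differentiable ℝ (deriv φ) := hdφ.differentiable (by norm_num)
  have hddφc : Continuous (deriv (deriv φ)) := (contDiff_one_iff_deriv.mp hdφ).2
  have hφc : Continuous φ := hφ.continuous
  have hdφc : Continuous (deriv φ) := hdφ.continuous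
  intro q hq
  -- ================= Part 1 : second derivative of Tarr φ =================
  set C1 : ℂ := ∫ x in (-1:ℝ)..1, (x:ℂ)^2 * φ x with hC1
  set g : ℝ → ℂ := fun s => (2*(s:ℂ)*(∫ x in (-1:ℝ)..s, φ x)
      + 2*(∫ x in (-1:ℝ)..s, (x:ℂ)*φ x) + C1) / (4*Complex.I) with hg
  set g1 : ℝ → ℂ := fun s => (2*(∫ x in (-1:ℝ)..s, φ x) + 4*(s:ℂ)*φ s) / (4*Complex.I)
    with hg1
  have hxc : Continuous (fun x : ℝ => (x:ℂ)*φ x) := by continuity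
  have hAd : ∀ s : ℝ, HasDerivAt (fun t : ℝ => ∫ x in (-1:ℝ)..t, φ x) (φ s) s :=
    fun s => (hφc.integral_hasStrictDerivAt (-1) s).hasDerivAt
  have hBd : ∀ s : ℝ, HasDerivAt (fun t : ℝ => ∫ x in (-1:ℝ)..t, (x:ℂ)*φ x) ((s:ℂ)*φ s) s :=
    fun s => (hxc.integral_hasStrictDerivAt (-1) s).hasDerivAt
  have hre : ∀ s : ℝ, HasDerivAt (fun t : ℝ => ((t:ℝ):ℂ)) 1 s :=
    fun s => (hasDerivAt_id s).ofReal_comp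
  have hTg : ∀ s ∈ Set.Ioo (-1:ℝ) 1, Tarr φ s = g s := by
    intro s hs
    rw [tarr_formula φ hφc hs, hm0, hm1, hg]
    ring
  have hgd : ∀ s : ℝ, HasDerivAt g (g1 s) s := by
    intro s
    have h1 : HasDerivAt (fun t : ℝ => 2*((t:ℝ):ℂ) * (∫ x in (-1:ℝ)..t, φ x))
        (2*1*(∫ x in (-1:ℝ)..s, φ x) + 2*(s:ℂ)*φ s) s :=
      ((hre s).const_mul 2).mul (hAd s)
    have h2 : HasDerivAt (fun t : ℝ => 2*(∫ x in (-1:ℝ)..t, (x:ℂ)*φ x)) (2*((s:ℂ)*φ s)) s :=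
      (hBd s).const_mul 2
    have h3 := ((h1.add h2).add_const C1).div_const (4*Complex.I)
    refine h3.congr_deriv ?_
    simp [hg1]; ring
  have hg1d : ∀ s : ℝ, HasDerivAt g1 ((2*φ s + (4*φ s + 4*(s:ℂ)*deriv φ s))/(4*Complex.I)) s := by
    intro s
    have h1 : HasDerivAt (fun t : ℝ => 2*(∫ x in (-1:ℝ)..t, φ x)) (2*φ s) s :=
      (hAd s).const_mul 2
    have h2 : HasDerivAt (fun t : ℝ => 4*((t:ℝ):ℂ) * φ t)
        (4*1*φ s + 4*(s:ℂ)*deriv φ s) s :=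
      ((hre s).const_mul 4).mul (hφd s).hasDerivAt
    have h3 := (h1.add h2).div_const (4*Complex.I)
    refine h3.congr_deriv ?_
    ring
  have hmem : Set.Ioo (-1:ℝ) 1 ∈ nhds q := isOpen_Ioo.mem_nhds hq
  have hTd1 : ∀ s ∈ Set.Ioo (-1:ℝ) 1, deriv (Tarr φ) s = g1 s := by
    intro s hs
    have heq : Tarr φ =ᶠ[nhds s] g :=
      Filter.eventuallyEq_of_mem (isOpen_Ioo.mem_nhds hs) hTg
    rw [heq.deriv_eq, (hgd s).deriv]
  have hTd2 : deriv (deriv (Tarr φ)) q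
      = (2*φ q + (4*φ q + 4*(q:ℂ)*deriv φ q))/(4*Complex.I) := by
    have heq : deriv (Tarr φ) =ᶠ[nhds q] g1 := Filter.eventuallyEq_of_mem hmem hTd1
    rw [heq.deriv_eq, (hg1d q).deriv]
  -- ================= Part 2 : Tarr (Hop φ) =================
  have hψc : Continuous (Hop φ) := by
    unfold Hop; exact continuous_const.mul hddφc
  have hAψ : ∀ b : ℝ, (∫ x in (-1:ℝ)..b, Hop φ x) = -(1/2) * (deriv φ b - deriv φ (-1)) := by
    intro b
    unfold Hop
    rw [intervalIntegral.integral_const_mul,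
      integral_deriv_eq_sub (fun x _ => hdφd x) (hddφc.intervalIntegrable _ _)]
  have hintφ' : ∀ a b : ℝ, (∫ x in a..b, deriv φ x) = φ b - φ a := fun a b =>
    integral_deriv_eq_sub (fun x _ => hφd x) (hdφc.intervalIntegrable _ _)
  have hBψ : ∀ b : ℝ, (∫ x in (-1:ℝ)..b, (x:ℂ) * Hop φ x)
      = -(1/2) * ((b:ℂ)*deriv φ b - (-1:ℂ)*deriv φ (-1) - (φ b - φ (-1))) := by
    intro b
    unfold Hop
    have h0 : ∀ x : ℝ, (x:ℂ) * (-(1/2:ℂ) * deriv (deriv φ) x)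
        = -(1/2:ℂ) * ((x:ℂ) * deriv (deriv φ) x) := fun x => by ring
    simp_rw [h0]
    rw [intervalIntegral.integral_const_mul]
    have hparts := integral_mul_deriv_eq_deriv_mul
      (u := fun x : ℝ => ((x:ℝ):ℂ)) (u' := fun _ => (1:ℂ))
      (v := deriv φ) (v' := deriv (deriv φ)) (a := (-1:ℝ)) (b := b)
      (fun x _ => hre x) (fun x _ => (hdφd x).hasDerivAt)
      (continuous_const.intervalIntegrable _ _) (hddφc.intervalIntegrable _ _)
    simp_rw [one_mul] at hparts
    rw [hparts, hintφ']
    push_cast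
    ring
  have hCψ : (∫ x in (-1:ℝ)..1, (x:ℂ)^2 * Hop φ x) = 0 := by
    unfold Hop
    have h0 : ∀ x : ℝ, (x:ℂ)^2 * (-(1/2:ℂ) * deriv (deriv φ) x)
        = -(1/2:ℂ) * ((x:ℂ)^2 * deriv (deriv φ) x) := fun x => by ring
    simp_rw [h0]
    rw [intervalIntegral.integral_const_mul]
    have hx2 : ∀ x : ℝ, HasDerivAt (fun t : ℝ => ((t:ℝ):ℂ)^2) (2*(x:ℂ)) x := by
      intro x
      have h : HasDerivAt (fun t : ℝ => ((t:ℝ):ℂ)^2) (1*(x:ℂ)+(x:ℂ)*1) x := by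
        simpa [pow_two, Pi.mul_def] using (hre x).mul (hre x)
      convert h using 1
      ring
    have hparts := integral_mul_deriv_eq_deriv_mul
      (u := fun x : ℝ => ((x:ℝ):ℂ)^2) (u' := fun x : ℝ => 2*(x:ℂ))
      (v := deriv φ) (v' := deriv (deriv φ)) (a := (-1:ℝ)) (b := 1)
      (fun x _ => hx2 x) (fun x _ => (hdφd x).hasDerivAt)
      ((Continuous.intervalIntegrable (by continuity) _ _))
      (hddφc.intervalIntegrable _ _)
    have hparts2 := integral_mul_deriv_eq_deriv_mul
      (u := fun x : ℝ => ((x:ℝ):ℂ)) (u' := fun _ => (1:ℂ))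
      (v := φ) (v' := deriv φ) (a := (-1:ℝ)) (b := 1)
      (fun x _ => hre x) (fun x _ => (hφd x).hasDerivAt)
      (continuous_const.intervalIntegrable _ _) (hdφc.intervalIntegrable _ _)
    simp_rw [one_mul] at hparts2
    rw [hm0] at hparts2
    have h2x : (∫ x in (-1:ℝ)..1, 2*(x:ℂ) * deriv φ x)
        = 2 * ∫ x in (-1:ℝ)..1, (x:ℂ) * deriv φ x := by
      simp_rw [mul_assoc]
      exact intervalIntegral.integral_const_mul 2 _
    rw [hparts, h2x, hparts2, hb1, hb2, hb3, hb4]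
    push_cast
    ring
  have hT2 : Tarr (Hop φ) q = ((φ q) - 2*(q:ℂ)*deriv φ q) / (4*Complex.I) := by
    rw [tarr_formula (Hop φ) hψc hq, hAψ, hAψ, hBψ, hBψ, hCψ, hb1, hb2, hb3, hb4]
    push_cast
    ring
  -- ================= conclusion =================
  have hHT : Hop (Tarr φ) q = -(1/2) * ((2*φ q + (4*φ q + 4*(q:ℂ)*deriv φ q))/(4*Complex.I)) := by
    unfold Hop
    rw [hTd2]
  rw [hT2, hHT]
  have hI : (4:ℂ)*Complex.I ≠ 0 := by
    simp [Complex.I_ne_zero]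
  field_simp
  ring_nf
  linear_combination 8 * φ q * Complex.I_sq
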